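/- Let Λ be an N×N real diagonal matrix with diagonal entries 0 < λ = λ_1 ≤ λ_2 ≤ … ≤ λ_N, let T ≥ 1, let b_1, …, b_T ∈ ℝ^N satisfy ‖b_t‖ ≤ 1 for all t, and for t ≥ 1 define B_t := Λ + Σ_{τ=1}^{t−1} b_τ b_τᵀ. Let d be the effective dimension. Then Σ_{t=1}^T ‖b_t‖_{B_t^{−1}} ≤ √( ((4 + 4λ)/λ) · d · T · ln((λ + T)/λ) ). -/

import Mathlib

set_option autoImplicit false
set_option maxHeartbeats 4000000
open Matrix Finset

lemma hadamard_det_le {n : Type*} [Fintype n] [LinearOrder n] [LocallyFiniteOrderBot n]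
    {S : Matrix n n ℝ} (hS : S.PosDef) : S.det ≤ ∏ i, S i i := by
  classical
  haveI := LDL.invertibleLowerInv hS
  set W := LDL.lowerInv hS with hW
  set L := LDL.lower hS with hL
  set dE := LDL.diagEntries hS with hdE
  have hWtri : W.BlockTriangular OrderDual.toDual := by
    intro i j hij
    exact LDL.lowerInv_triangular hS hij
  have hLtri : L.BlockTriangular OrderDual.toDual :=
    blockTriangular_inv_of_blockTriangular hWtri
  have hdetL : L.det = ∏ i, L i i := Matrix.det_of_lowerTriangular L hLtri
  have hDdiag : LDL.diag hS = W * S * Wᴴ := LDL.diag_eq_lowerInv_conj hS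
  have hdEnn : ∀ i, 0 ≤ dE i := by
    intro i
    have h1 : dE i = (W * S * Wᴴ) i i := by
      rw [← hDdiag]; simp [LDL.diag, hdE]
    have h2 : (W * S * Wᴴ) i i = (W i) ⬝ᵥ (S *ᵥ (W i)) := by
      simp only [Matrix.mul_apply, Matrix.conjTranspose_apply, dotProduct, Matrix.mulVec,
        Finset.sum_mul, Finset.mul_sum, star_trivial]
      rw [Finset.sum_comm]
      apply Finset.sum_congr rfl; intro j _
      apply Finset.sum_congr rfl; intro k _
      ring
    have := hS.posSemidef.dotProduct_mulVec_nonneg (W i)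
    rw [star_trivial] at this
    rw [h1, h2]; exact this
  have hSLDL : S = L * LDL.diag hS * Lᴴ := (LDL.lower_conj_diag hS).symm
  have hSdiag : ∀ i, (L i i)^2 * dE i ≤ S i i := by
    intro i
    have h2 : S i i = ∑ j, (L i j)^2 * dE j := by
      conv_lhs => rw [hSLDL]
      simp only [Matrix.mul_apply, Matrix.conjTranspose_apply, LDL.diag,
        Matrix.diagonal_apply, star_trivial, mul_ite, ite_mul, mul_zero, zero_mul,
        Finset.sum_ite_eq', Finset.mem_univ, if_true]
      apply Finset.sum_congr rfl; intro j _
      ring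
    rw [h2]
    exact Finset.single_le_sum (f := fun j => (L i j)^2 * dE j)
      (fun j _ => mul_nonneg (sq_nonneg _) (hdEnn j)) (Finset.mem_univ i)
  have hdet : S.det = ∏ i, (L i i)^2 * dE i := by
    conv_lhs => rw [hSLDL]
    rw [Matrix.det_mul, Matrix.det_mul]
    have hdetLH : (Lᴴ).det = L.det := by
      rw [Matrix.det_conjTranspose, star_trivial]
    rw [hdetLH, hdetL]
    have : (LDL.diag hS).det = ∏ i, dE i := by
      simp [LDL.diag, hdE]
    rw [this, ← Finset.prod_mul_distrib, ← Finset.prod_mul_distrib]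
    apply Finset.prod_congr rfl; intro i _; ring
  rw [hdet]
  exact Finset.prod_le_prod (fun i _ => mul_nonneg (sq_nonneg _) (hdEnn i)) (fun i _ => hSdiag i)

theorem sum_matrix_norms_bound
    (N T : ℕ) (hT : 1 ≤ T) (lam : ℕ → ℝ) (hpos : 0 < lam 1)
    (hmono : ∀ i j, 1 ≤ i → i ≤ j → j ≤ N → lam i ≤ lam j)
    (Λ : Matrix (Fin N) (Fin N) ℝ)
    (hΛ : Λ = Matrix.diagonal (fun i : Fin N => lam (i.1 + 1)))
    (b : ℕ → (Fin N → ℝ))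
    (hb : ∀ t, 1 ≤ t → t ≤ T → Real.sqrt (b t ⬝ᵥ b t) ≤ 1)
    (B : ℕ → Matrix (Fin N) (Fin N) ℝ)
    (hB : ∀ t, B t = Λ + ∑ τ ∈ Finset.Icc 1 (t - 1), Matrix.vecMulVec (b τ) (b τ))
    (d : ℕ) (hd1 : 1 ≤ d) (hdN : d ≤ N)
    (hdcond : ((d : ℝ) - 1) * lam d ≤ T / Real.log (1 + T / lam 1))
    (hdmax : ∀ d', 1 ≤ d' → d' ≤ N →
      ((d' : ℝ) - 1) * lam d' ≤ T / Real.log (1 + T / lam 1) → d' ≤ d) :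
    ∑ t ∈ Finset.Icc 1 T, Real.sqrt (b t ⬝ᵥ (B t)⁻¹.mulVec (b t)) ≤
      Real.sqrt ((4 + 4 * lam 1) / lam 1 * d * T * Real.log ((lam 1 + T) / lam 1)) := by
  classical
  have hN1 : 1 ≤ N := le_trans hd1 hdN
  haveI hNZ : NeZero N := ⟨by omega⟩
  have hl1 : 0 < lam 1 := hpos
  have hlam_pos : ∀ i, 1 ≤ i → i ≤ N → 0 < lam i :=
    fun i h1 hN => lt_of_lt_of_le hpos (hmono 1 i le_rfl h1 hN)
  -- positive definiteness
  have hΛpd : Λ.PosDef := by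
    rw [hΛ]
    exact Matrix.PosDef.diagonal (fun i => hlam_pos (i.1+1) (by omega) (by omega))
  have hpsd : ∀ s : Finset ℕ, Matrix.PosSemidef (∑ τ ∈ s, Matrix.vecMulVec (b τ) (b τ)) := by
    intro s
    apply Finset.sum_induction _ _ (fun A C hA hC => hA.add hC) Matrix.PosSemidef.zero
    intro τ _
    have h1 : Matrix.vecMulVec (b τ) (b τ) = Matrix.replicateCol Unit (b τ) * (Matrix.replicateCol Unit (b τ))ᴴ := by
      rw [Matrix.vecMulVec_eq Unit, Matrix.conjTranspose_replicateCol, star_trivial]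
    rw [h1]
    exact Matrix.posSemidef_self_mul_conjTranspose _
  have hBpd : ∀ t, (B t).PosDef := by
    intro t
    rw [hB]
    exact hΛpd.add_posSemidef (hpsd _)
  have hBdet_unit : ∀ t, IsUnit (B t).det := fun t => isUnit_iff_ne_zero.mpr (hBpd t).det_pos.ne'
  set q : ℕ → ℝ := fun t => b t ⬝ᵥ (B t)⁻¹.mulVec (b t) with hqdef
  have hq0 : ∀ t, 0 ≤ q t := by
    intro t
    have := ((hBpd t).inv).posSemidef.dotProduct_mulVec_nonneg (b t)
    rwa [star_trivial] at this
  have hdot_nonneg : ∀ v : Fin N → ℝ, 0 ≤ v ⬝ᵥ v :=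
    fun v => Finset.sum_nonneg (fun i _ => mul_self_nonneg _)
  -- q ≤ 1/λ₁
  have hqle : ∀ t, 1 ≤ t → t ≤ T → q t ≤ 1 / lam 1 := by
    intro t h1 h2
    set A := B t with hA
    set y := A⁻¹ *ᵥ b t with hy
    have hbb : b t ⬝ᵥ b t ≤ 1 := by
      have h := hb t h1 h2
      nlinarith [Real.sq_sqrt (hdot_nonneg (b t)), Real.sqrt_nonneg (b t ⬝ᵥ b t)]
    have hrec : A *ᵥ y = b t := by
      rw [hy, Matrix.mulVec_mulVec, Matrix.mul_nonsing_inv _ (hBdet_unit t), Matrix.one_mulVec]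
    have hq_eq : q t = y ⬝ᵥ A *ᵥ y := by
      show b t ⬝ᵥ y = _
      conv_lhs => rw [← hrec]
      exact dotProduct_comm _ _
    have hyy0 : 0 ≤ y ⬝ᵥ y := hdot_nonneg y
    have hlow : lam 1 * (y ⬝ᵥ y) ≤ q t := by
      rw [hq_eq, hA, hB t, Matrix.add_mulVec, dotProduct_add]
      have h1' : lam 1 * (y ⬝ᵥ y) ≤ y ⬝ᵥ Λ *ᵥ y := by
        rw [hΛ]
        simp only [Matrix.mulVec_diagonal, dotProduct, Finset.mul_sum]
        apply Finset.sum_le_sum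
        intro i _
        have : lam 1 ≤ lam (i.1+1) := hmono 1 (i.1+1) le_rfl (by omega) (by omega)
        nlinarith [mul_self_nonneg (y i)]
      have h2' : 0 ≤ y ⬝ᵥ (∑ τ ∈ Finset.Icc 1 (t-1), Matrix.vecMulVec (b τ) (b τ)) *ᵥ y := by
        have := (hpsd (Finset.Icc 1 (t-1))).dotProduct_mulVec_nonneg y
        rwa [star_trivial] at this
      linarith
    have hq_by : q t = b t ⬝ᵥ y := rfl
    have hup : q t ^ 2 ≤ (b t ⬝ᵥ b t) * (y ⬝ᵥ y) := by
      rw [hq_by]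
      calc (b t ⬝ᵥ y)^2 = (∑ i, b t i * y i)^2 := rfl
        _ ≤ (∑ i, b t i^2) * (∑ i, y i^2) := Finset.sum_mul_sq_le_sq_mul_sq Finset.univ (b t) y
        _ = (b t ⬝ᵥ b t) * (y ⬝ᵥ y) := by simp [dotProduct, sq]
    rcases eq_or_lt_of_le (hq0 t) with h0 | h0
    · rw [← h0]; positivity
    · have h3 : q t^2 ≤ y ⬝ᵥ y := le_trans hup (by nlinarith [hyy0, hbb, hdot_nonneg (b t)])
      have h4 : lam 1 * q t^2 ≤ q t := le_trans (mul_le_mul_of_nonneg_left h3 hl1.le) hlow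
      have h5 : lam 1 * q t ≤ 1 := by nlinarith [h0]
      rw [le_div_iff₀ hl1]
      linarith
  -- determinant recursion
  have hdet_step : ∀ k, (B (k+1+1)).det = (B (k+1)).det * (1 + q (k+1)) := by
    intro k
    have hsplit : B (k+1+1) = B (k+1) +
        Matrix.replicateCol Unit (b (k+1)) * Matrix.replicateRow Unit (b (k+1)) := by
      rw [hB, hB]
      simp only [Nat.add_sub_cancel]
      rw [Finset.sum_Icc_succ_top (Nat.le_add_left 1 k), ← Matrix.vecMulVec_eq Unit, add_assoc]
    rw [hsplit, Matrix.det_add_replicateCol_mul_replicateRow (hBdet_unit (k+1))]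
    congr 1
    rw [Matrix.det_unique]
    simp only [Matrix.add_apply, Matrix.one_apply_eq, Matrix.mul_apply, Matrix.replicateRow_apply,
      Matrix.replicateCol_apply, Finset.univ_unique, Finset.sum_singleton]
    congr 1
    show _ = b (k+1) ⬝ᵥ (B (k+1))⁻¹.mulVec (b (k+1))
    simp only [dotProduct, Matrix.mulVec, Matrix.mul_apply, Finset.sum_mul, Finset.mul_sum,
      dotProduct]
    rw [Finset.sum_comm]
    apply Finset.sum_congr rfl; intro i _
    apply Finset.sum_congr rfl; intro j _
    ring
  have hdet_tel : ∀ k, (B (k+1)).det = Λ.det * ∏ t ∈ Finset.Icc 1 k, (1 + q t) := by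
    intro k
    induction k with
    | zero => rw [hB]; simp
    | succ n ih =>
      rw [hdet_step n, ih, Finset.prod_Icc_succ_top (Nat.le_add_left 1 n), mul_assoc]
  -- product identity
  have hΛdet : Λ.det = ∏ i : Fin N, lam (i.1+1) := by rw [hΛ, Matrix.det_diagonal]
  have hΛdet_pos : 0 < Λ.det := hΛpd.det_pos
  have hΛprod_pos : 0 < ∏ i : Fin N, lam (i.1+1) := hΛdet ▸ hΛdet_pos
  have hprod : ∏ t ∈ Finset.Icc 1 T, (1 + q t) = (B (T+1)).det / Λ.det := by
    rw [hdet_tel T, mul_div_cancel_left₀ _ hΛdet_pos.ne']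
  -- diagonal entries of B (T+1)
  set s : Fin N → ℝ := fun i => ∑ t ∈ Finset.Icc 1 T, (b t i)^2 with hsdef
  have hBdiag : ∀ i : Fin N, B (T+1) i i = lam (i.1+1) + s i := by
    intro i
    rw [hB]
    simp only [Nat.add_sub_cancel, Matrix.add_apply, Matrix.sum_apply, Matrix.vecMulVec_apply, hΛ,
      Matrix.diagonal_apply_eq]
    congr 1
    apply Finset.sum_congr rfl; intro t _; ring
  have hs0 : ∀ i, 0 ≤ s i := fun i => Finset.sum_nonneg (fun t _ => sq_nonneg _)
  have hbb' : ∀ t ∈ Finset.Icc 1 T, b t ⬝ᵥ b t ≤ 1 := by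
    intro t ht
    rw [Finset.mem_Icc] at ht
    have h := hb t ht.1 ht.2
    nlinarith [Real.sq_sqrt (hdot_nonneg (b t)), Real.sqrt_nonneg (b t ⬝ᵥ b t)]
  have hdots : ∀ v : Fin N → ℝ, v ⬝ᵥ v = ∑ i, v i^2 := by
    intro v; simp [dotProduct, sq]
  have hsT : ∀ i, s i ≤ (T:ℝ) := by
    intro i
    calc s i ≤ ∑ t ∈ Finset.Icc 1 T, 1 := by
          apply Finset.sum_le_sum
          intro t ht
          have h1 : (b t i)^2 ≤ ∑ j, (b t j)^2 :=
            Finset.single_le_sum (f := fun j => (b t j)^2) (fun j _ => sq_nonneg _)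
              (Finset.mem_univ i)
          have h2 := hbb' t ht
          rw [hdots] at h2
          linarith
      _ = (T:ℝ) := by simp [Nat.card_Icc]
  have hsums : ∑ i : Fin N, s i ≤ (T:ℝ) := by
    rw [hsdef]
    rw [Finset.sum_comm]
    calc ∑ t ∈ Finset.Icc 1 T, ∑ i : Fin N, (b t i)^2 ≤ ∑ t ∈ Finset.Icc 1 T, 1 := by
          apply Finset.sum_le_sum
          intro t ht
          have h2 := hbb' t ht
          rw [hdots] at h2
          exact h2
      _ = (T:ℝ) := by simp [Nat.card_Icc]
  -- the log quantity
  set Lg := Real.log ((lam 1 + (T:ℝ))/lam 1) with hLgdef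
  have hT0 : (0:ℝ) < T := by exact_mod_cast Nat.lt_of_lt_of_le Nat.zero_lt_one hT
  have hfrac : (lam 1 + (T:ℝ))/lam 1 = 1 + (T:ℝ)/lam 1 := by field_simp
  have hLgpos : 0 < Lg := by
    rw [hLgdef, hfrac]
    apply Real.log_pos
    have : 0 < (T:ℝ)/lam 1 := div_pos hT0 hl1
    linarith
  -- per-coordinate bounds
  have hterm : ∀ i : Fin N, Real.log ((lam (i.1+1) + s i)/lam (i.1+1)) ≤
      (if i.1 + 1 ≤ d then Lg else s i / lam (d+1)) := by
    intro i
    have hli : 0 < lam (i.1+1) := hlam_pos _ (by omega) (by omega)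
    by_cases hcase : i.1 + 1 ≤ d
    · rw [if_pos hcase, hLgdef]
      rw [Real.log_le_log_iff (by positivity) (by positivity)]
      rw [div_le_div_iff₀ hli hl1]
      have h1 : lam 1 ≤ lam (i.1+1) := hmono 1 _ le_rfl (by omega) (by omega)
      nlinarith [hs0 i, hsT i, hT0]
    · rw [if_neg hcase]
      have hdlt : d < N := by omega
      have hld : 0 < lam (d+1) := hlam_pos (d+1) (by omega) (by omega)
      have h1 : lam (d+1) ≤ lam (i.1+1) := hmono (d+1) (i.1+1) (by omega) (by omega) (by omega)
      have h2 : Real.log ((lam (i.1+1) + s i)/lam (i.1+1)) ≤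
          (lam (i.1+1) + s i)/lam (i.1+1) - 1 :=
        Real.log_le_sub_one_of_pos (by positivity)
      have h3 : (lam (i.1+1) + s i)/lam (i.1+1) - 1 = s i / lam (i.1+1) := by field_simp; ring
      have h4 : s i / lam (i.1+1) ≤ s i / lam (d+1) :=
        div_le_div_of_nonneg_left (hs0 i) hld h1
      linarith
  have hcard : (Finset.univ.filter (fun i : Fin N => i.1 + 1 ≤ d)).card ≤ d := by
    have h := Finset.card_le_card_of_injOn
      (f := fun i : Fin N => (⟨min i.1 (d-1), by omega⟩ : Fin d))
      (s := Finset.univ.filter (fun i : Fin N => i.1 + 1 ≤ d)) (t := Finset.univ)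
      (fun a _ => Finset.mem_univ _) ?_
    · simpa using h
    · intro a ha a' ha' hfa
      simp only [Finset.mem_coe, Finset.mem_filter] at ha ha'
      have ha1 : a.1 ≤ d - 1 := by omega
      have ha2 : a'.1 ≤ d - 1 := by omega
      have : min a.1 (d-1) = min a'.1 (d-1) := congrArg Fin.val hfa
      rw [min_eq_left ha1, min_eq_left ha2] at this
      exact Fin.ext this
  have hsum_ite : ∑ i : Fin N, (if i.1 + 1 ≤ d then Lg else s i / lam (d+1)) ≤
      2 * d * Lg := by
    rw [Finset.sum_ite]
    have h1 : ∑ _i ∈ Finset.univ.filter (fun i : Fin N => i.1+1 ≤ d), Lg ≤ d * Lg := by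
      rw [Finset.sum_const, nsmul_eq_mul]
      exact mul_le_mul_of_nonneg_right (by exact_mod_cast hcard) hLgpos.le
    have h2 : ∑ i ∈ Finset.univ.filter (fun i : Fin N => ¬(i.1+1 ≤ d)), s i / lam (d+1) ≤
        d * Lg := by
      by_cases hdlt : d < N
      · have hld : 0 < lam (d+1) := hlam_pos (d+1) (by omega) (by omega)
        have hTd : (T:ℝ) / lam (d+1) < d * Lg := by
          have hnot : ¬((((d+1:ℕ)):ℝ) - 1) * lam (d+1) ≤ (T:ℝ) / Real.log (1 + T/lam 1) := by
            intro hcon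
            have := hdmax (d+1) (by omega) (by omega) hcon
            omega
          push_neg at hnot
          have hL0 : Real.log (1 + (T:ℝ)/lam 1) = Lg := by rw [hLgdef, hfrac]
          rw [hL0] at hnot
          have hd' : (((d+1:ℕ)):ℝ) - 1 = (d:ℝ) := by push_cast; ring
          rw [hd'] at hnot
          rw [div_lt_iff₀ hLgpos] at hnot
          rw [div_lt_iff₀ hld]
          nlinarith
        calc ∑ i ∈ Finset.univ.filter (fun i : Fin N => ¬(i.1+1 ≤ d)), s i / lam (d+1)
            = (∑ i ∈ Finset.univ.filter (fun i : Fin N => ¬(i.1+1 ≤ d)), s i) / lam (d+1) := by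
              rw [Finset.sum_div]
          _ ≤ (∑ i : Fin N, s i) / lam (d+1) := by
              apply div_le_div_of_nonneg_right ?_ hld.le
              exact Finset.sum_le_sum_of_subset_of_nonneg (Finset.subset_univ _)
                (fun i _ _ => hs0 i)
          _ ≤ (T:ℝ)/lam (d+1) := div_le_div_of_nonneg_right hsums hld.le
          _ ≤ d * Lg := hTd.le
      · have hempty : Finset.univ.filter (fun i : Fin N => ¬(i.1+1 ≤ d)) = ∅ := by
          rw [Finset.filter_eq_empty_iff]
          intro i _
          push_neg
          omega
        rw [hempty, Finset.sum_empty]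
        positivity
    linarith
  -- total log bound
  have hlogsum : ∑ t ∈ Finset.Icc 1 T, Real.log (1 + q t) ≤ 2 * d * Lg := by
    have hpos1 : ∀ t ∈ Finset.Icc 1 T, (0:ℝ) < 1 + q t := fun t _ => by linarith [hq0 t]
    have h1 : ∑ t ∈ Finset.Icc 1 T, Real.log (1+q t) =
        Real.log (∏ t ∈ Finset.Icc 1 T, (1+q t)) :=
      (Real.log_prod (fun t ht => (hpos1 t ht).ne')).symm
    have hprodpos : 0 < ∏ t ∈ Finset.Icc 1 T, (1+q t) := Finset.prod_pos hpos1
    have hHad : (B (T+1)).det ≤ ∏ i : Fin N, (lam (i.1+1) + s i) := by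
      have hH := hadamard_det_le (hBpd (T+1))
      have hH' : (B (T+1)).det ≤ ∏ i, B (T+1) i i := by
        convert hH using 2
      calc (B (T+1)).det ≤ ∏ i, B (T+1) i i := hH'
        _ = ∏ i, (lam (i.1+1) + s i) := Finset.prod_congr rfl (fun i _ => hBdiag i)
    have hratio_pos : ∀ i : Fin N, 0 < (lam (i.1+1) + s i)/lam (i.1+1) := by
      intro i
      have hli : 0 < lam (i.1+1) := hlam_pos _ (by omega) (by omega)
      have := hs0 i
      positivity
    have hprodle : ∏ t ∈ Finset.Icc 1 T, (1+q t) ≤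
        ∏ i : Fin N, ((lam (i.1+1) + s i)/lam (i.1+1)) := by
      rw [hprod, hΛdet, Finset.prod_div_distrib]
      exact (div_le_div_iff_of_pos_right hΛprod_pos).mpr hHad
    rw [h1]
    calc Real.log (∏ t ∈ Finset.Icc 1 T, (1+q t))
        ≤ Real.log (∏ i : Fin N, ((lam (i.1+1) + s i)/lam (i.1+1))) :=
          (Real.log_le_log_iff hprodpos (Finset.prod_pos (fun i _ => hratio_pos i))).mpr hprodle
      _ = ∑ i : Fin N, Real.log ((lam (i.1+1)+s i)/lam (i.1+1)) :=
          Real.log_prod (fun i _ => (hratio_pos i).ne')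
      _ ≤ ∑ i : Fin N, (if i.1 + 1 ≤ d then Lg else s i / lam (d+1)) :=
          Finset.sum_le_sum (fun i _ => hterm i)
      _ ≤ 2*d*Lg := hsum_ite
  -- from log bound to sum of q
  have hqlog : ∀ t ∈ Finset.Icc 1 T, q t ≤ (1 + 1/lam 1) * Real.log (1 + q t) := by
    intro t ht
    rw [Finset.mem_Icc] at ht
    have hx0 := hq0 t
    have hx1 := hqle t ht.1 ht.2
    have h1x : (0:ℝ) < 1 + q t := by linarith
    have hlg : q t/(1+q t) ≤ Real.log (1+q t) := by
      have h := Real.one_sub_inv_le_log_of_pos h1x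
      have heq : 1 - (1+q t)⁻¹ = q t/(1+q t) := by field_simp; ring
      linarith [heq ▸ h]
    have key : q t ≤ (1+1/lam 1) * (q t/(1+q t)) := by
      rw [← mul_div_assoc]
      rw [le_div_iff₀ h1x]
      nlinarith [hx0, hx1, hl1]
    calc q t ≤ (1+1/lam 1)*(q t/(1+q t)) := key
      _ ≤ (1+1/lam 1) * Real.log (1+q t) :=
          mul_le_mul_of_nonneg_left hlg (by positivity)
  have hsumq : ∑ t ∈ Finset.Icc 1 T, q t ≤ (1+1/lam 1) * (2*d*Lg) := by
    calc ∑ t ∈ Finset.Icc 1 T, q t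
        ≤ ∑ t ∈ Finset.Icc 1 T, (1+1/lam 1) * Real.log (1+q t) := Finset.sum_le_sum hqlog
      _ = (1+1/lam 1) * ∑ t ∈ Finset.Icc 1 T, Real.log (1+q t) := by rw [Finset.mul_sum]
      _ ≤ (1+1/lam 1) * (2*d*Lg) := mul_le_mul_of_nonneg_left hlogsum (by positivity)
  have hCS : (∑ t ∈ Finset.Icc 1 T, Real.sqrt (q t))^2 ≤
      (T:ℝ) * ∑ t ∈ Finset.Icc 1 T, q t := by
    calc (∑ t ∈ Finset.Icc 1 T, Real.sqrt (q t))^2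
        = (∑ t ∈ Finset.Icc 1 T, 1 * Real.sqrt (q t))^2 := by simp
      _ ≤ (∑ t ∈ Finset.Icc 1 T, (1:ℝ)^2) * (∑ t ∈ Finset.Icc 1 T, Real.sqrt (q t)^2) :=
          Finset.sum_mul_sq_le_sq_mul_sq _ _ _
      _ = (T:ℝ) * ∑ t ∈ Finset.Icc 1 T, q t := by
          congr 1
          · simp [Nat.card_Icc]
          · exact Finset.sum_congr rfl (fun t _ => Real.sq_sqrt (hq0 t))
  have hmain : (∑ t ∈ Finset.Icc 1 T, Real.sqrt (q t))^2 ≤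
      (4+4*lam 1)/lam 1 * d * T * Lg := by
    have h1 : (T:ℝ) * ((1+1/lam 1) * (2*d*Lg)) = (2+2*lam 1)/lam 1 * d * T * Lg := by
      field_simp
      ring
    have hfac : (2+2*lam 1)/lam 1 ≤ (4+4*lam 1)/lam 1 :=
      (div_le_div_iff_of_pos_right hl1).mpr (by linarith)
    have hnn : (0:ℝ) ≤ (d:ℝ) * T * Lg := by positivity
    calc (∑ t ∈ Finset.Icc 1 T, Real.sqrt (q t))^2
        ≤ (T:ℝ) * ∑ t ∈ Finset.Icc 1 T, q t := hCS
      _ ≤ (T:ℝ) * ((1+1/lam 1)*(2*d*Lg)) := mul_le_mul_of_nonneg_left hsumq hT0.le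
      _ = (2+2*lam 1)/lam 1 * d * T * Lg := h1
      _ = (2+2*lam 1)/lam 1 * ((d:ℝ)*T*Lg) := by ring
      _ ≤ (4+4*lam 1)/lam 1 * ((d:ℝ)*T*Lg) := mul_le_mul_of_nonneg_right hfac hnn
      _ = (4+4*lam 1)/lam 1 * d * T * Lg := by ring
  have hS0 : 0 ≤ ∑ t ∈ Finset.Icc 1 T, Real.sqrt (q t) :=
    Finset.sum_nonneg (fun t _ => Real.sqrt_nonneg _)
  show ∑ t ∈ Finset.Icc 1 T, Real.sqrt (q t) ≤
      Real.sqrt ((4 + 4 * lam 1) / lam 1 * d * T * Lg)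
  calc ∑ t ∈ Finset.Icc 1 T, Real.sqrt (q t)
      = Real.sqrt ((∑ t ∈ Finset.Icc 1 T, Real.sqrt (q t))^2) := (Real.sqrt_sq hS0).symm
    _ ≤ Real.sqrt ((4+4*lam 1)/lam 1 * d * T * Lg) := Real.sqrt_le_sqrt hmain
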